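/- Neumann boundary identity for the spherical cap: Let ζ ∈ S², ρ ∈ (0,2) with ρ ≠ 1, let ξ ∈ S² satisfy 1 − ξ·ζ < ρ, and let ř, ξ̌ be the scaling factor and reflection point of ξ. Then for every η ∈ S² with ζ·η = 1 − ρ: (ζ − (1−ρ)η) · ( (ξ − (ξ·η)η)/(1 − ξ·η) + (ξ̌ − (ξ̌·η)η)/(1 − ξ̌·η) ) = 2(1 − ρ). (Equivalently, the Neumann Green function of the cap, G_N(ξ,η) = (1/(4π))log(1−ξ·η) + (1/(4π))log(ř(1−ξ̌·η)) + ((1−ρ)/(2πρ))log(1+ζ·η), has vanishing outward normal derivative in η at every boundary point of Γ_ρ(ζ).) -/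

import Mathlib

open Real
open scoped RealInnerProductSpace

noncomputable section

/-- ℝ³ as Euclidean space. -/
abbrev E3 : Type := EuclideanSpace ℝ (Fin 3)

/-- The scaling factor of the spherical reflection (Kelvin) point of ξ relative to the
spherical cap Γ_ρ(ζ). -/
def scalFact (ζ ξ : E3) (ρ : ℝ) : ℝ :=
  -((1 + 2 * ⟪ξ, ζ⟫ * (ρ - 1) + (ρ - 1) ^ 2) / (ρ * (ρ - 2)))

/-- The spherical reflection (Kelvin) point of ξ relative to the spherical cap Γ_ρ(ζ). -/
def reflPt (ζ ξ : E3) (ρ : ℝ) : E3 :=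
  (scalFact ζ ξ ρ)⁻¹ • ξ - ((scalFact ζ ξ ρ - 1) / (scalFact ζ ξ ρ * (ρ - 1))) • ζ

set_option maxHeartbeats 1000000 in
/-- Neumann boundary identity for the spherical cap: the Neumann Green
function of the cap has vanishing outward normal derivative at the boundary. -/
theorem neumann_boundary_identity (ζ : E3) (hζ : ζ ∈ Metric.sphere (0 : E3) 1)
    (ρ : ℝ) (hρ0 : 0 < ρ) (hρ2 : ρ < 2) (hρ1 : ρ ≠ 1)
    (ξ : E3) (hξ : ξ ∈ Metric.sphere (0 : E3) 1) (hξcap : 1 - ⟪ξ, ζ⟫ < ρ) :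
    ∀ η : E3, η ∈ Metric.sphere (0 : E3) 1 → ⟪ζ, η⟫ = 1 - ρ →
      ⟪ζ - (1 - ρ) • η,
        (1 - ⟪ξ, η⟫)⁻¹ • (ξ - ⟪ξ, η⟫ • η) +
          (1 - ⟪reflPt ζ ξ ρ, η⟫)⁻¹ • (reflPt ζ ξ ρ - ⟪reflPt ζ ξ ρ, η⟫ • η)⟫ =
        2 * (1 - ρ) := by
  intro η hη hζη
  have hρ' : ρ ≠ 0 := ne_of_gt hρ0
  have hρ2' : ρ - 2 ≠ 0 := by intro h; linarith
  have hρ1' : ρ - 1 ≠ 0 := sub_ne_zero.mpr hρ1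
  have hnζ : ‖ζ‖ = 1 := mem_sphere_zero_iff_norm.mp hζ
  have hnξ : ‖ξ‖ = 1 := mem_sphere_zero_iff_norm.mp hξ
  have hnη : ‖η‖ = 1 := mem_sphere_zero_iff_norm.mp hη
  have hηη : ⟪η, η⟫ = 1 := by
    rw [real_inner_self_eq_norm_sq, hnη]; norm_num
  have hζζ : ⟪ζ, ζ⟫ = 1 := by
    rw [real_inner_self_eq_norm_sq, hnζ]; norm_num
  set a := ⟪ξ, ζ⟫ with ha_def
  set b := ⟪ξ, η⟫ with hb_def
  have haζ : ⟪ζ, ξ⟫ = a := real_inner_comm ξ ζ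
  have hbη : ⟪η, ξ⟫ = b := real_inner_comm ξ η
  have ha1 : |a| ≤ 1 := by
    have := abs_real_inner_le_norm ξ ζ
    rwa [hnξ, hnζ, one_mul] at this
  obtain ⟨ha1l, ha1r⟩ := abs_le.mp ha1
  have hb1 : b < 1 := by
    rcases lt_or_eq_of_le (by
      have := real_inner_le_norm ξ η
      rwa [hnξ, hnη, one_mul] at this : b ≤ 1) with h | h
    · exact h
    · exfalso
      have hξη : ξ = η := (inner_eq_one_iff_of_norm_eq_one hnξ hnη).mp h
      have : a = 1 - ρ := by
        rw [ha_def, hξη, real_inner_comm]; exact hζη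
      linarith
  have h1b : (1 : ℝ) - b ≠ 0 := by intro h; linarith
  -- positivity of scaling factor
  have hnum : 0 < 1 + 2 * a * (ρ - 1) + (ρ - 1) ^ 2 := by
    nlinarith [sq_nonneg ρ, sq_nonneg (ρ - 2), mul_nonneg (by linarith : (0:ℝ) ≤ 1 + a) (by linarith : (0:ℝ) ≤ 1 - a)]
  have hnum' : 1 + 2 * a * (ρ - 1) + (ρ - 1) ^ 2 ≠ 0 := ne_of_gt hnum
  set r := scalFact ζ ξ ρ with hr_def
  have hrpos : 0 < r := by
    rw [hr_def]; unfold scalFact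
    rw [← ha_def, ← div_neg]
    apply div_pos hnum
    have : ρ * (ρ - 2) < 0 := mul_neg_of_pos_of_neg hρ0 (by linarith)
    linarith
  have hr0 : r ≠ 0 := ne_of_gt hrpos
  -- inner products with the reflection point
  have hc : ⟪reflPt ζ ξ ρ, η⟫ = (b + r - 1) / r := by
    simp only [reflPt, inner_sub_left, real_inner_smul_left, ← hr_def, ← hb_def, hζη]
    field_simp
    ring
  have hd : ⟪ζ, reflPt ζ ξ ρ⟫ = (a * (ρ - 1) - (r - 1)) / (r * (ρ - 1)) := by
    simp only [reflPt, inner_sub_right, real_inner_smul_right, ← hr_def, haζ, hζζ]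
    field_simp
  have hcomm : ⟪η, reflPt ζ ξ ρ⟫ = (b + r - 1) / r := by
    rw [real_inner_comm]; exact hc
  have hinv : (1 - (b + r - 1) / r)⁻¹ = r * (1 - b)⁻¹ := by
    rw [show 1 - (b + r - 1) / r = (1 - b) / r by field_simp; ring, inv_div,
      div_eq_mul_inv]
  -- expand the main inner product
  simp only [inner_sub_left, inner_add_right, inner_sub_right, real_inner_smul_left,
    real_inner_smul_right, hc, hd, hcomm, hζη, hηη, haζ, hbη, ← hb_def, hinv]
  have hrval : r * (ρ * (ρ - 2)) = -(1 + 2 * a * (ρ - 1) + (ρ - 1) ^ 2) := by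
    rw [hr_def]; unfold scalFact; rw [← ha_def]; field_simp
  field_simp [h1b, hr0, hρ1']
  linear_combination hrval
end
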